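/- Let (R, 𝔪) be a Noetherian local ring and let I ⊆ R be an ideal generated by a regular sequence x₁, …, xₙ. If f₁, …, fₙ ∈ I are elements whose images in I/𝔪I form a generating set (equivalently, a basis of the κ-vector space I/𝔪I), then f₁, …, fₙ generate I and form a regular sequence. -/

import Mathlib

open RingTheory.Sequence Submodule
open scoped Pointwise

universe u

theorem aux_key (n : ℕ) :
    ∀ {R : Type u} [CommRing R] [IsNoetherianRing R] [IsLocalRing R]
      (lx lf : List R), lx.length = n → lf.length = n →
      IsRegular R lx → Ideal.ofList lx = Ideal.ofList lf → IsRegular R lf := by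
  induction n with
  | zero =>
    intro R _ _ _ lx lf _ hlf hreg _
    obtain rfl := List.length_eq_zero_iff.mp hlf
    have := hreg.nontrivial
    exact IsRegular.nil R R
  | succ n ih =>
    intro R _ _ _ lx lf hlx hlf hreg hspan
    classical
    have hsmultop : ∀ J : Ideal R, (J • ⊤ : Ideal R) = J := fun J => by
      rw [smul_eq_mul, Ideal.mul_top]
    have hItop : Ideal.ofList lx ≠ ⊤ := by
      intro h
      refine hreg.top_ne_smul ?_
      rw [h, hsmultop]
    have hIm : Ideal.ofList lx ≤ IsLocalRing.maximalIdeal R :=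
      IsLocalRing.le_maximalIdeal hItop
    have hlxI : ∀ a ∈ lx, a ∈ Ideal.ofList lx := fun a ha => Ideal.subset_span ha
    have hlfI : ∀ a ∈ lf, a ∈ Ideal.ofList lx := fun a ha =>
      hspan ▸ Ideal.subset_span ha
    -- find f₀ ∈ lf not in 𝔪 • I
    have hexf : ∃ f₀ ∈ lf, f₀ ∉ (IsLocalRing.maximalIdeal R • Ideal.ofList lx : Ideal R) := by
      by_contra h
      push_neg at h
      have h1 : Ideal.ofList lx ≤ IsLocalRing.maximalIdeal R • Ideal.ofList lx := by
        nth_rewrite 1 [hspan]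
        exact Ideal.span_le.mpr h
      have h2 : Ideal.ofList lx = ⊥ :=
        le_bot_iff.mp (Submodule.le_of_le_smul_of_le_jacobson_bot
          (IsNoetherian.noetherian _)
          (IsLocalRing.jacobson_eq_maximalIdeal ⊥ bot_ne_top).ge
          (by rwa [bot_sup_eq]))
      have hne : lx ≠ [] := List.ne_nil_of_length_pos (by omega)
      have hx₀ : lx.head hne ∈ Ideal.ofList lx := hlxI _ (List.head_mem hne)
      rw [h2, Ideal.mem_bot] at hx₀
      have hreg' : IsRegular R (lx.head hne :: lx.tail) :=
        (List.cons_head_tail hne).symm ▸ hreg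
      have hsm : IsSMulRegular R (lx.head hne) :=
        ((isRegular_cons_iff R _ _).mp hreg').1
      rw [hx₀] at hsm
      have := hreg.nontrivial
      obtain ⟨a, b, hab⟩ := exists_pair_ne R
      exact hab (hsm (by simp))
    obtain ⟨f₀, hf₀lf, hf₀m⟩ := hexf
    have hf₀I : f₀ ∈ Ideal.ofList lx := hlfI f₀ hf₀lf
    -- representation of f₀ with a unit coefficient
    obtain ⟨c, hcsupp, hcsum⟩ := Submodule.mem_span_set.mp hf₀I
    have hexg : ∃ g ∈ c.support, IsUnit (c g) := by
      by_contra h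
      push_neg at h
      apply hf₀m
      rw [← hcsum, Finsupp.sum]
      refine Ideal.sum_mem _ fun g hg => ?_
      exact Submodule.smul_mem_smul (IsLocalRing.mem_maximalIdeal _ |>.mpr (h g hg))
        (hlxI g (hcsupp hg))
    obtain ⟨g, hgs, hgu⟩ := hexg
    have hglx : g ∈ lx := hcsupp hgs
    -- z := f₀ - c g * g lies in the span of the other xs
    have hz : f₀ - c g * g ∈ Ideal.ofList (lx.erase g) := by
      have : f₀ - c g * g = ∑ b ∈ c.support.erase g, c b • b := by
        rw [← hcsum, Finsupp.sum, ← Finset.sum_erase_add _ _ hgs, smul_eq_mul,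
          add_sub_cancel_right]
      rw [this]
      refine Ideal.sum_mem _ fun b hb => ?_
      obtain ⟨hbne, hbs⟩ := Finset.mem_erase.mp hb
      exact Submodule.smul_mem _ _ (Ideal.subset_span
        ((List.mem_erase_of_ne hbne).mpr (hcsupp hbs)))
    set L' := lx.erase g with hL'
    set lf' := lf.erase f₀ with hlf'
    have hlen1 : L'.length = n := by
      rw [hL', List.length_erase_of_mem hglx, hlx]
      omega
    have hlen2 : lf'.length = n := by
      rw [hlf', List.length_erase_of_mem hf₀lf, hlf]
      omega
    have perm1 : lx.Perm (g :: L') := List.perm_cons_erase hglx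
    have perm2 : lf.Perm (f₀ :: lf') := List.perm_cons_erase hf₀lf
    have hregP : IsRegular R (g :: L') := IsLocalRing.isRegular_of_perm hreg perm1
    have hregA : IsRegular R (L' ++ [g]) :=
      IsLocalRing.isRegular_of_perm hregP (List.perm_append_singleton g L').symm
    obtain ⟨hw, -⟩ := (isRegular_iff R _).mp hregA
    obtain ⟨hwL, hwg⟩ := (isWeaklyRegular_append_iff R L' [g]).mp hw
    have hsg : IsSMulRegular (R ⧸ (Ideal.ofList L' • ⊤ : Submodule R R)) g :=
      (isWeaklyRegular_singleton_iff _ g).mp hwg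
    -- f₀ acts like (c g) * g on R ⧸ ofList L'
    have hkey : ∀ q : R ⧸ (Ideal.ofList L' • ⊤ : Submodule R R),
        f₀ • q = (c g * g) • q := by
      intro q
      obtain ⟨m, rfl⟩ := Submodule.Quotient.mk_surjective _ q
      rw [← Submodule.Quotient.mk_smul, ← Submodule.Quotient.mk_smul,
        ← sub_eq_zero, ← Submodule.Quotient.mk_sub, Submodule.Quotient.mk_eq_zero,
        ← sub_smul]
      exact Submodule.smul_mem_smul hz mem_top
    have hsf : IsSMulRegular (R ⧸ (Ideal.ofList L' • ⊤ : Submodule R R)) f₀ := by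
      have h2 : IsSMulRegular (R ⧸ (Ideal.ofList L' • ⊤ : Submodule R R)) (c g * g) :=
        (hgu.isSMulRegular _).mul hsg
      intro a b hab
      refine h2 ?_
      have ha' := hkey a
      have hb' := hkey b
      simp only at ha' hb' hab ⊢
      rw [← ha', ← hb']
      exact hab
    have hsub : Ideal.ofList (L' ++ [f₀]) ≤ Ideal.ofList lx := by
      refine Ideal.span_le.mpr fun a ha => ?_
      rcases List.mem_append.mp ha with h | h
      · exact hlxI a (List.mem_of_mem_erase h)
      · rw [List.mem_singleton.mp h]; exact hf₀I
    have hregA2 : IsRegular R (L' ++ [f₀]) := by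
      rw [RingTheory.Sequence.isRegular_iff]
      refine ⟨(isWeaklyRegular_append_iff R L' [f₀]).mpr
        ⟨hwL, (isWeaklyRegular_singleton_iff _ f₀).mpr hsf⟩, ?_⟩
      rw [hsmultop]
      exact fun h => hItop (top_le_iff.mp (h.le.trans hsub))
    have hregC : IsRegular R (f₀ :: L') :=
      IsLocalRing.isRegular_of_perm hregA2 (List.perm_append_singleton f₀ L')
    -- ideal equalities
    obtain ⟨u, hu⟩ := hgu
    have hgmem : g ∈ Ideal.ofList (f₀ :: L') := by
      have hf0 : f₀ ∈ Ideal.ofList (f₀ :: L') :=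
        Ideal.subset_span (List.mem_cons_self)
      have hzm : f₀ - c g * g ∈ Ideal.ofList (f₀ :: L') :=
        Ideal.span_mono (fun a ha => List.mem_cons_of_mem f₀ ha) hz
      have h3 : c g * g ∈ Ideal.ofList (f₀ :: L') := by
        have := Ideal.sub_mem _ hf0 hzm
        rwa [sub_sub_cancel] at this
      have h4 := Ideal.mul_mem_left _ (↑u⁻¹ : R) h3
      rwa [← hu, ← mul_assoc, Units.inv_mul, one_mul] at h4
    have hIeq : Ideal.ofList (f₀ :: L') = Ideal.ofList lx := by
      apply le_antisymm
      · refine Ideal.span_le.mpr fun a ha => ?_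
        rcases List.mem_cons.mp ha with rfl | h
        · exact hf₀I
        · exact hlxI a (List.mem_of_mem_erase h)
      · have h4 : Ideal.ofList lx = Ideal.ofList (g :: L') :=
          congrArg Ideal.span (Set.ext fun a => perm1.mem_iff)
        rw [h4]
        refine Ideal.span_le.mpr fun a ha => ?_
        rcases List.mem_cons.mp ha with rfl | h
        · exact hgmem
        · exact Ideal.subset_span (List.mem_cons_of_mem _ h)
    have hIf : Ideal.ofList (f₀ :: lf') = Ideal.ofList lx := by
      rw [hspan]
      exact (congrArg Ideal.span (Set.ext fun a => perm2.mem_iff)).symm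
    -- pass to the quotient ring R ⧸ (f₀)
    have hf₀span : Ideal.span {f₀} ≠ ⊤ := fun h =>
      hItop (top_le_iff.mp (h ▸ Ideal.span_le.mpr (by simpa using hf₀I)))
    haveI : Nontrivial (R ⧸ Ideal.span {f₀}) := Ideal.Quotient.nontrivial_iff.mpr hf₀span
    haveI : IsLocalRing (R ⧸ Ideal.span {f₀}) :=
      IsLocalRing.of_surjective' (Ideal.Quotient.mk _) Ideal.Quotient.mk_surjective
    obtain ⟨hsf₀R, hregQ⟩ := (isRegular_cons_iff' R f₀ L').mp hregC
    -- transfer between QuotSMulTop f₀ R and the quotient ring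
    have heq : (f₀ • ⊤ : Submodule R R) = (Ideal.span {f₀} : Ideal R) := by
      rw [← Submodule.ideal_span_singleton_smul, smul_eq_mul, Ideal.mul_top]
    let e : (R ⧸ (f₀ • ⊤ : Submodule R R)) ≃ₗ[R] R ⧸ (Ideal.span {f₀} : Ideal R) :=
      Submodule.quotEquivOfEq _ _ heq
    have etrans : ∀ l : List (R ⧸ Ideal.span {f₀}),
        IsRegular (QuotSMulTop f₀ R) l ↔ IsRegular (R ⧸ Ideal.span {f₀}) l := by
      intro l
      refine e.toAddEquiv.isRegular_congr (List.forall₂_same.mpr fun r hr x => ?_)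
      obtain ⟨m, rfl⟩ := Submodule.Quotient.mk_surjective _ x
      obtain ⟨a, rfl⟩ := Ideal.Quotient.mk_surjective r
      rfl
    -- ideal equality downstairs
    have hmapeq : ∀ ls : List R, Ideal.ofList (f₀ :: ls) = Ideal.ofList lx →
        Ideal.ofList (ls.map (Ideal.Quotient.mk (Ideal.span {f₀}))) =
          Ideal.map (Ideal.Quotient.mk (Ideal.span {f₀})) (Ideal.ofList lx) := by
      intro ls hls
      rw [← hls, Ideal.ofList_cons, Ideal.map_sup, ← Ideal.map_ofList]
      have : Ideal.map (Ideal.Quotient.mk (Ideal.span {f₀})) (Ideal.span {f₀}) = ⊥ := by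
        rw [Ideal.map_span]
        simp [Ideal.Quotient.eq_zero_iff_mem, Ideal.subset_span]
      rw [this, bot_sup_eq]
    have hIH : IsRegular (R ⧸ Ideal.span {f₀})
        (lf'.map (Ideal.Quotient.mk (Ideal.span {f₀}))) := by
      refine ih (L'.map (Ideal.Quotient.mk (Ideal.span {f₀})))
        (lf'.map (Ideal.Quotient.mk (Ideal.span {f₀})))
        (by simpa using hlen1) (by simpa using hlen2)
        ((etrans _).mp hregQ) ?_
      rw [hmapeq L' hIeq, hmapeq lf' hIf]
    have hregQ' : IsRegular (QuotSMulTop f₀ R)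
        (lf'.map (Ideal.Quotient.mk (Ideal.span {f₀}))) := (etrans _).mpr hIH
    exact IsLocalRing.isRegular_of_perm (IsRegular.cons' hsf₀R hregQ') perm2.symm

/-- In a Noetherian local ring (R, 𝔪), if the ideal I is generated by a regular sequence
x₁, …, xₙ and f₁, …, fₙ ∈ I generate I modulo 𝔪I, then f₁, …, fₙ generate I and form a
regular sequence. -/
theorem stmt11 {R : Type*} [CommRing R] [IsNoetherianRing R] [IsLocalRing R]
    (n : ℕ) (x f : Fin n → R) (I : Ideal R)
    (hI : I = Ideal.span (Set.range x))
    (hxreg : IsRegular R (List.ofFn x))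
    (hfI : ∀ i, f i ∈ I)
    (hgen : I ≤ Ideal.span (Set.range f) ⊔ IsLocalRing.maximalIdeal R * I) :
    Ideal.span (Set.range f) = I ∧ IsRegular R (List.ofFn f) := by
  have hJle : Ideal.span (Set.range f) ≤ I :=
    Ideal.span_le.mpr (Set.range_subset_iff.mpr hfI)
  have hNak : Ideal.span (Set.range f) = I := by
    refine le_antisymm hJle ?_
    refine Submodule.le_of_le_smul_of_le_jacobson_bot (IsNoetherian.noetherian I)
      (IsLocalRing.jacobson_eq_maximalIdeal ⊥ bot_ne_top).ge ?_
    rwa [smul_eq_mul]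
  refine ⟨hNak, ?_⟩
  refine aux_key n (List.ofFn x) (List.ofFn f) (by simp) (by simp) hxreg ?_
  have h1 : {r | r ∈ List.ofFn x} = Set.range x := by ext a; simp [List.mem_ofFn]
  have h2 : {r | r ∈ List.ofFn f} = Set.range f := by ext a; simp [List.mem_ofFn]
  show Ideal.span _ = Ideal.span _
  rw [h1, h2, hNak, hI]
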